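/- (Calderón–Zygmund dyadic decomposition.) Let Q₁ be the unit cube in ℝ^N, let A ⊂ B ⊂ Q₁ be measurable sets, let δ₁, δ₂ ∈ (0,1) and L ∈ ℕ. Suppose: (1) |A| ≤ δ₁; (2) for every dyadic subcube Q ∈ 𝒟_ℓ of Q₁ of generation ℓ ≤ L, if |Q ∩ A| > δ₁|Q| then pre(Q) ⊂ B; (3) for every Q ∈ 𝒟_L, if |Q ∩ A| > δ₂|Q| then Q ⊂ B. Then |A| ≤ δ₁|B| + δ₂. -/

import Mathlib

open MeasureTheory Set

noncomputable section

/-- The open dyadic subcube of the unit cube `(0,1)^N` of generation `ℓ` indexed by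
`k : Fin N → ℕ` (meaningful when `k i < 2 ^ ℓ` for all `i`). -/
def dyadicCube (N : ℕ) (ℓ : ℕ) (k : Fin N → ℕ) : Set (EuclideanSpace ℝ (Fin N)) :=
  {x | ∀ i, (k i : ℝ) / 2 ^ ℓ < x i ∧ x i < ((k i : ℝ) + 1) / 2 ^ ℓ}

open scoped ENNReal

namespace CZaux

lemma dc_eq_preimage (N ℓ : ℕ) (k : Fin N → ℕ) :
    dyadicCube N ℓ k = ((MeasurableEquiv.toLp 2 (Fin N → ℝ)).symm) ⁻¹'
      (Set.univ.pi fun i => Ioo ((k i : ℝ) / 2 ^ ℓ) (((k i : ℝ) + 1) / 2 ^ ℓ)) := by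
  ext x
  simp [dyadicCube, Set.mem_pi, Set.mem_Ioo]

lemma dc_measurable (N ℓ : ℕ) (k : Fin N → ℕ) : MeasurableSet (dyadicCube N ℓ k) := by
  rw [dc_eq_preimage]
  exact (MeasurableEquiv.measurable _) (MeasurableSet.univ_pi fun i => measurableSet_Ioo)

lemma dc_volume (N ℓ : ℕ) (k : Fin N → ℕ) :
    volume (dyadicCube N ℓ k) = (((2:ℝ≥0∞) ^ ℓ)⁻¹) ^ N := by
  rw [dc_eq_preimage,
    (EuclideanSpace.volume_preserving_symm_measurableEquiv_toLp (Fin N)).measure_preimage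
      ((MeasurableSet.univ_pi fun i => measurableSet_Ioo).nullMeasurableSet)]
  rw [show (volume : Measure (Fin N → ℝ)) = Measure.pi fun _ => volume from rfl]
  rw [Measure.pi_pi]
  have h : ∀ i : Fin N, volume (Ioo ((k i : ℝ) / 2 ^ ℓ) (((k i : ℝ) + 1) / 2 ^ ℓ))
      = ((2:ℝ≥0∞) ^ ℓ)⁻¹ := by
    intro i
    rw [Real.volume_Ioo]
    have h2 : ((k i : ℝ) + 1) / 2 ^ ℓ - (k i : ℝ) / 2 ^ ℓ = (2 ^ ℓ)⁻¹ := by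
      field_simp
      ring
    rw [h2, ENNReal.ofReal_inv_of_pos (by positivity),
      ENNReal.ofReal_pow (by norm_num : (0:ℝ) ≤ 2)]
    norm_num
  simp [h]

lemma key_div (ℓ e : ℕ) (a b : ℕ) (h : a * 2 ^ e ≤ b) :
    (a : ℝ) / 2 ^ ℓ ≤ (b : ℝ) / 2 ^ (ℓ + e) := by
  rw [div_le_div_iff₀ (by positivity) (by positivity), pow_add]
  have : (a : ℝ) * 2 ^ e ≤ b := by exact_mod_cast h
  nlinarith [pow_pos (by norm_num : (0:ℝ) < 2) ℓ, pow_pos (by norm_num : (0:ℝ) < 2) e]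

lemma key_div' (ℓ e : ℕ) (a b : ℕ) (h : b ≤ a * 2 ^ e) :
    (b : ℝ) / 2 ^ (ℓ + e) ≤ (a : ℝ) / 2 ^ ℓ := by
  rw [div_le_div_iff₀ (by positivity) (by positivity), pow_add]
  have : (b : ℝ) ≤ a * 2 ^ e := by exact_mod_cast h
  nlinarith [pow_pos (by norm_num : (0:ℝ) < 2) ℓ, pow_pos (by norm_num : (0:ℝ) < 2) e]

lemma dc_subset {N ℓ ℓ' : ℕ} (hll : ℓ ≤ ℓ') {k k' : Fin N → ℕ}
    (h : ∀ i, k i * 2 ^ (ℓ' - ℓ) ≤ k' i ∧ k' i + 1 ≤ (k i + 1) * 2 ^ (ℓ' - ℓ)) :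
    dyadicCube N ℓ' k' ⊆ dyadicCube N ℓ k := by
  intro x hx i
  obtain ⟨h1, h2⟩ := hx i
  have he : ℓ' = ℓ + (ℓ' - ℓ) := by omega
  constructor
  · calc (k i : ℝ) / 2 ^ ℓ ≤ (k' i : ℝ) / 2 ^ (ℓ + (ℓ' - ℓ)) := key_div _ _ _ _ (h i).1
    _ < x i := by rw [← he]; exact h1
  · calc x i < ((k' i : ℝ) + 1) / 2 ^ ℓ' := h2
    _ = ((k' i + 1 : ℕ) : ℝ) / 2 ^ (ℓ + (ℓ' - ℓ)) := by rw [← he]; push_cast; ring_nf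
    _ ≤ ((k i + 1 : ℕ) : ℝ) / 2 ^ ℓ := key_div' _ _ _ _ (h i).2
    _ = ((k i : ℝ) + 1) / 2 ^ ℓ := by push_cast; ring_nf

lemma dc_disjoint {N ℓ ℓ' : ℕ} (hll : ℓ ≤ ℓ') {k k' : Fin N → ℕ} (i : Fin N)
    (h : k' i + 1 ≤ k i * 2 ^ (ℓ' - ℓ) ∨ (k i + 1) * 2 ^ (ℓ' - ℓ) ≤ k' i) :
    Disjoint (dyadicCube N ℓ k) (dyadicCube N ℓ' k') := by
  rw [Set.disjoint_left]
  intro x hx hx'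
  obtain ⟨a1, a2⟩ := hx i
  obtain ⟨b1, b2⟩ := hx' i
  have he : ℓ' = ℓ + (ℓ' - ℓ) := by omega
  rcases h with h | h
  · have : ((k' i : ℝ) + 1) / 2 ^ ℓ' ≤ (k i : ℝ) / 2 ^ ℓ := by
      calc ((k' i : ℝ) + 1) / 2 ^ ℓ' = ((k' i + 1 : ℕ) : ℝ) / 2 ^ (ℓ + (ℓ' - ℓ)) := by
            rw [← he]; push_cast; ring_nf
      _ ≤ (k i : ℝ) / 2 ^ ℓ := key_div' _ _ _ _ h
    linarith
  · have : ((k i : ℝ) + 1) / 2 ^ ℓ ≤ (k' i : ℝ) / 2 ^ ℓ' := by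
      calc ((k i : ℝ) + 1) / 2 ^ ℓ = ((k i + 1 : ℕ) : ℝ) / 2 ^ ℓ := by push_cast; ring_nf
      _ ≤ (k' i : ℝ) / 2 ^ (ℓ + (ℓ' - ℓ)) := key_div _ _ _ _ h
      _ = (k' i : ℝ) / 2 ^ ℓ' := by rw [← he]
    linarith

lemma dc_dichotomy {N ℓ ℓ' : ℕ} (hll : ℓ ≤ ℓ') (k k' : Fin N → ℕ) :
    dyadicCube N ℓ' k' ⊆ dyadicCube N ℓ k ∨
      Disjoint (dyadicCube N ℓ k) (dyadicCube N ℓ' k') := by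
  by_cases h : ∀ i, k i * 2 ^ (ℓ' - ℓ) ≤ k' i ∧ k' i + 1 ≤ (k i + 1) * 2 ^ (ℓ' - ℓ)
  · exact Or.inl (dc_subset hll h)
  · push_neg at h
    obtain ⟨i, hi⟩ := h
    refine Or.inr (dc_disjoint hll i ?_)
    omega

lemma union_bound {N : ℕ} (A : Set (EuclideanSpace ℝ (Fin N))) (δ : ℝ≥0∞)
    (s : Finset (ℕ × (Fin N → ℕ)))
    (h : ∀ c ∈ s, volume (dyadicCube N c.1 c.2 ∩ A) ≤ δ * volume (dyadicCube N c.1 c.2)) :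
    volume ((⋃ c ∈ s, dyadicCube N c.1 c.2) ∩ A) ≤
      δ * volume (⋃ c ∈ s, dyadicCube N c.1 c.2) := by
  classical
  induction s using Finset.strongInduction with
  | _ s ih =>
    rcases s.eq_empty_or_nonempty with rfl | hne
    · simp
    obtain ⟨c₀, hc₀, hmin⟩ := s.exists_min_image Prod.fst hne
    set D : ℕ × (Fin N → ℕ) → Set (EuclideanSpace ℝ (Fin N)) :=
      fun c => dyadicCube N c.1 c.2 with hD
    set s' := s.filter (fun c => ¬ (D c ⊆ D c₀)) with hs'
    have hsub : s' ⊂ s := by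
      rw [Finset.filter_ssubset]
      exact ⟨c₀, hc₀, by simp⟩
    have hunion : (⋃ c ∈ s, D c) = D c₀ ∪ ⋃ c ∈ s', D c := by
      apply Set.Subset.antisymm
      · intro x hx
        simp only [Set.mem_iUnion] at hx
        obtain ⟨c, hc, hxc⟩ := hx
        by_cases hcc : D c ⊆ D c₀
        · exact Or.inl (hcc hxc)
        · exact Or.inr (Set.mem_biUnion (Finset.mem_filter.mpr ⟨hc, hcc⟩) hxc)
      · apply Set.union_subset
        · exact Set.subset_biUnion_of_mem hc₀
        · exact Set.iUnion₂_mono' fun c hc => ⟨c, Finset.mem_of_mem_filter c hc, le_rfl⟩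
    have hdisj : Disjoint (D c₀) (⋃ c ∈ s', D c) := by
      rw [Set.disjoint_iUnion₂_right]
      intro c hc
      rw [Finset.mem_filter] at hc
      rcases dc_dichotomy (hmin c hc.1) c₀.2 c.2 with hsubc | hdis
      · exact absurd hsubc hc.2
      · exact hdis
    have hmeas' : MeasurableSet (⋃ c ∈ s', D c) :=
      Finset.measurableSet_biUnion s' fun c _ => dc_measurable N c.1 c.2
    have hvol : volume (⋃ c ∈ s, D c) = volume (D c₀) + volume (⋃ c ∈ s', D c) := by
      rw [hunion, measure_union hdisj hmeas']
    calc volume ((⋃ c ∈ s, D c) ∩ A)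
        ≤ volume (D c₀ ∩ A) + volume ((⋃ c ∈ s', D c) ∩ A) := by
          rw [hunion, Set.union_inter_distrib_right]
          exact measure_union_le _ _
      _ ≤ δ * volume (D c₀) + δ * volume (⋃ c ∈ s', D c) := by
          gcongr
          · exact h c₀ hc₀
          · exact ih s' hsub fun c hc => h c (Finset.mem_of_mem_filter c hc)
      _ = δ * volume (⋃ c ∈ s, D c) := by rw [hvol, mul_add]

lemma hyperplane_null (N : ℕ) (i : Fin N) (c : ℝ) :
    volume {x : EuclideanSpace ℝ (Fin N) | x i = c} = 0 := by
  have : {x : EuclideanSpace ℝ (Fin N) | x i = c} =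
      ((MeasurableEquiv.toLp 2 (Fin N → ℝ)).symm) ⁻¹' {f : Fin N → ℝ | f i = c} := rfl
  rw [this, (EuclideanSpace.volume_preserving_symm_measurableEquiv_toLp (Fin N)).measure_preimage
    ((measurableSet_eq_fun (measurable_pi_apply i) measurable_const).nullMeasurableSet),
    show (volume : Measure (Fin N → ℝ)) = Measure.pi fun _ => volume from rfl]
  exact Measure.pi_hyperplane (fun _ => (volume : Measure ℝ)) i c

lemma covering (N L : ℕ) :
    dyadicCube N 0 (fun _ => 0) ⊆
      (⋃ k ∈ Fintype.piFinset (fun _ : Fin N => Finset.range (2 ^ L)), dyadicCube N L k) ∪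
      ⋃ i : Fin N, ⋃ j ∈ Finset.range (2 ^ L + 1), {x | x i = (j : ℝ) / 2 ^ L} := by
  intro x hx
  have hx' : ∀ i, (0:ℝ) < x i ∧ x i < 1 := by
    intro i
    have := hx i
    norm_num at this
    exact this
  set k : Fin N → ℕ := fun i => ⌊x i * 2 ^ L⌋₊ with hk
  have hklt : ∀ i, k i < 2 ^ L := by
    intro i
    rw [hk, Nat.floor_lt (le_of_lt (mul_pos (hx' i).1 (by positivity)))]
    have := (hx' i).2
    push_cast
    nlinarith [pow_pos (by norm_num : (0:ℝ) < 2) L]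
  have hlow : ∀ i, (k i : ℝ) / 2 ^ L ≤ x i := by
    intro i
    rw [div_le_iff₀ (by positivity)]
    exact Nat.floor_le (le_of_lt (mul_pos (hx' i).1 (by positivity)))
  have hhigh : ∀ i, x i < ((k i : ℝ) + 1) / 2 ^ L := by
    intro i
    rw [lt_div_iff₀ (by positivity)]
    exact Nat.lt_floor_add_one _
  by_cases hb : ∀ i, x i ≠ (k i : ℝ) / 2 ^ L
  · left
    have hk1 : k ∈ Fintype.piFinset (fun _ : Fin N => Finset.range (2 ^ L)) :=
      Fintype.mem_piFinset.mpr fun i => Finset.mem_range.mpr (hklt i)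
    have hk2 : x ∈ dyadicCube N L k :=
      fun i => ⟨lt_of_le_of_ne (hlow i) (Ne.symm (hb i)), hhigh i⟩
    exact Set.mem_biUnion hk1 hk2
  · right
    push_neg at hb
    obtain ⟨i, hi⟩ := hb
    refine Set.mem_iUnion.mpr ⟨i, Set.mem_biUnion ?_ hi⟩
    exact Finset.mem_range.mpr (by have := hklt i; omega)

lemma dc_ancestor {N L ℓ : ℕ} (hl : ℓ ≤ L) (k : Fin N → ℕ) :
    dyadicCube N L k ⊆ dyadicCube N ℓ (fun i => k i / 2 ^ (L - ℓ)) := by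
  apply dc_subset hl
  intro i
  refine ⟨Nat.div_mul_le_self _ _, ?_⟩
  have h0 : 0 < 2 ^ (L - ℓ) := Nat.two_pow_pos _
  have h := Nat.div_add_mod (k i) (2 ^ (L - ℓ))
  have h2 := Nat.mod_lt (k i) h0
  nlinarith [Nat.div_mul_le_self (k i) (2 ^ (L - ℓ))]

end CZaux

open CZaux

/-- Calderón–Zygmund dyadic decomposition. -/
theorem calderon_zygmund_dyadic_decomposition (N : ℕ) (L : ℕ) (δ₁ δ₂ : ℝ)
    (hδ₁ : δ₁ ∈ Set.Ioo (0 : ℝ) 1) (hδ₂ : δ₂ ∈ Set.Ioo (0 : ℝ) 1)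
    (A B : Set (EuclideanSpace ℝ (Fin N)))
    (hA : MeasurableSet A) (hB : MeasurableSet B)
    (hAB : A ⊆ B) (hBQ : B ⊆ dyadicCube N 0 (fun _ => 0))
    (h1 : volume A ≤ ENNReal.ofReal δ₁)
    (h2 : ∀ ℓ : ℕ, 1 ≤ ℓ → ℓ ≤ L → ∀ k : Fin N → ℕ, (∀ i, k i < 2 ^ ℓ) →
      ENNReal.ofReal δ₁ * volume (dyadicCube N ℓ k) < volume (dyadicCube N ℓ k ∩ A) →
      dyadicCube N (ℓ - 1) (fun i => k i / 2) ⊆ B)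
    (h3 : ∀ k : Fin N → ℕ, (∀ i, k i < 2 ^ L) →
      ENNReal.ofReal δ₂ * volume (dyadicCube N L k) < volume (dyadicCube N L k ∩ A) →
      dyadicCube N L k ⊆ B) :
    volume A ≤ ENNReal.ofReal δ₁ * volume B + ENNReal.ofReal δ₂ := by
  classical
  have hQ1 : A ⊆ dyadicCube N 0 (fun _ => 0) := hAB.trans hBQ
  -- density of the unit cube
  have density0 : ∀ z : Fin N → ℕ, (∀ i, z i = 0) →
      volume (dyadicCube N 0 z ∩ A) ≤ ENNReal.ofReal δ₁ * volume (dyadicCube N 0 z) := by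
    intro z hz
    have hz' : z = fun _ => 0 := funext hz
    subst hz'
    rw [Set.inter_eq_self_of_subset_right hQ1, dc_volume]
    simpa using h1
  set allL := Fintype.piFinset (fun _ : Fin N => Finset.range (2 ^ L)) with hallL
  set hi : (Fin N → ℕ) → Prop := fun k =>
    ENNReal.ofReal δ₂ * volume (dyadicCube N L k) < volume (dyadicCube N L k ∩ A) with hhi
  set H := allL.filter hi with hH
  set anc : ℕ → (Fin N → ℕ) → (Fin N → ℕ) := fun ℓ k i => k i / 2 ^ (L - ℓ) with hanc
  set P : (Fin N → ℕ) → ℕ → Prop := fun k ℓ => 1 ≤ ℓ ∧ ℓ ≤ L ∧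
      ENNReal.ofReal δ₁ * volume (dyadicCube N ℓ (anc ℓ k)) <
        volume (dyadicCube N ℓ (anc ℓ k) ∩ A) with hP
  set c : (Fin N → ℕ) → ℕ × (Fin N → ℕ) := fun k =>
      if h : ∃ ℓ, P k ℓ then (Nat.find h - 1, anc (Nat.find h - 1) k) else (L, k) with hc
  -- anc validity
  have anc_valid : ∀ (k : Fin N → ℕ), (∀ i, k i < 2 ^ L) → ∀ ℓ ≤ L, ∀ i,
      anc ℓ k i < 2 ^ ℓ := by
    intro k hk ℓ hℓ i
    rw [hanc]
    simp only
    rw [Nat.div_lt_iff_lt_mul (Nat.two_pow_pos _), ← pow_add]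
    have : ℓ + (L - ℓ) = L := by omega
    rw [this]
    exact hk i
  have anc_L : ∀ k : Fin N → ℕ, anc L k = k := by
    intro k
    funext i
    simp [hanc]
  -- property (a) : containment
  have prop_a : ∀ k : Fin N → ℕ, dyadicCube N L k ⊆ dyadicCube N (c k).1 (c k).2 := by
    intro k
    rw [hc]
    simp only
    split_ifs with h
    · exact dc_ancestor (by have := (Nat.find_spec h).2.1; omega) k
    · exact subset_rfl
  -- property (b) : density of selected cube
  have prop_b : ∀ k : Fin N → ℕ, (∀ i, k i < 2 ^ L) →
      volume (dyadicCube N (c k).1 (c k).2 ∩ A) ≤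
        ENNReal.ofReal δ₁ * volume (dyadicCube N (c k).1 (c k).2) := by
    intro k hk
    rw [hc]
    simp only
    split_ifs with h
    · set m := Nat.find h - 1 with hm
      rcases Nat.eq_zero_or_pos m with hm0 | hm1
      · rw [hm0]
        apply density0
        intro i
        simp only [hanc]
        exact Nat.div_eq_of_lt (by simpa using hk i)
      · have hmlt : m < Nat.find h := by omega
        have hnot := Nat.find_min h hmlt
        rw [hP] at hnot
        simp only [not_and, not_lt] at hnot
        exact hnot hm1 (by have := (Nat.find_spec h).2.1; omega)
    · rcases Nat.eq_zero_or_pos L with hL0 | hL1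
      · subst hL0
        apply density0
        intro i
        show k i = 0
        have := hk i
        simp only [pow_zero] at this
        omega
      · have hnot : ¬ P k L := fun hPk => h ⟨L, hPk⟩
        rw [hP] at hnot
        simp only [not_and, not_lt] at hnot
        have := hnot hL1 le_rfl
        rwa [anc_L] at this
  -- property (c) : selected cube inside B
  have prop_c : ∀ k ∈ H, dyadicCube N (c k).1 (c k).2 ⊆ B := by
    intro k hkH
    have hkall : k ∈ allL := Finset.mem_of_mem_filter k hkH
    have hk : ∀ i, k i < 2 ^ L := by
      intro i
      have := Fintype.mem_piFinset.mp hkall i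
      exact Finset.mem_range.mp this
    have hkhi : hi k := (Finset.mem_filter.mp hkH).2
    rw [hc]
    simp only
    split_ifs with h
    · set m := Nat.find h with hm
      obtain ⟨hm1, hmL, hdens⟩ := Nat.find_spec h
      have hvalid : ∀ i, anc m k i < 2 ^ m := anc_valid k hk m hmL
      have hsubB := h2 m hm1 hmL (anc m k) hvalid hdens
      have heq : (fun i => anc m k i / 2) = anc (m - 1) k := by
        funext i
        simp only [hanc]
        rw [Nat.div_div_eq_div_mul, ← pow_succ]
        congr 2
        omega
      rwa [heq] at hsubB
    · exact h3 k hk hkhi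
  -- the union M of selected cubes
  set S := H.image c with hS
  set M := ⋃ p ∈ S, dyadicCube N p.1 p.2 with hM
  have hMB : M ⊆ B := by
    rw [hM]
    apply Set.iUnion₂_subset
    intro p hp
    obtain ⟨k, hkH, rfl⟩ := Finset.mem_image.mp hp
    exact prop_c k hkH
  have hMbound : volume (M ∩ A) ≤ ENNReal.ofReal δ₁ * volume B := by
    calc volume (M ∩ A) ≤ ENNReal.ofReal δ₁ * volume M := by
          apply union_bound
          intro p hp
          obtain ⟨k, hkH, rfl⟩ := Finset.mem_image.mp hp
          have hkall : k ∈ allL := Finset.mem_of_mem_filter k hkH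
          exact prop_b k (fun i => Finset.mem_range.mp (Fintype.mem_piFinset.mp hkall i))
      _ ≤ ENNReal.ofReal δ₁ * volume B := by
          gcongr
  -- step 1 : volume A  ≤ sum over generation-L cubes
  have step1 : volume A ≤ ∑ k ∈ allL, volume (dyadicCube N L k ∩ A) := by
    set Z := ⋃ i : Fin N, ⋃ j ∈ Finset.range (2 ^ L + 1),
      {x : EuclideanSpace ℝ (Fin N) | x i = (j : ℝ) / 2 ^ L} with hZ
    have hZ0 : volume Z = 0 := by
      rw [hZ]
      apply measure_iUnion_null
      intro i
      apply measure_biUnion_null_iff (Finset.countable_toSet _) |>.mpr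
      intro j _
      exact hyperplane_null N i _
    have hsub : A ⊆ (⋃ k ∈ allL, dyadicCube N L k ∩ A) ∪ Z := by
      intro x hx
      rcases covering N L (hQ1 hx) with hx' | hx'
      · left
        simp only [Set.mem_iUnion] at hx' ⊢
        obtain ⟨k, hk, hxk⟩ := hx'
        exact ⟨k, hk, hxk, hx⟩
      · right; exact hx'
    calc volume A ≤ volume ((⋃ k ∈ allL, dyadicCube N L k ∩ A) ∪ Z) := measure_mono hsub
      _ ≤ volume (⋃ k ∈ allL, dyadicCube N L k ∩ A) + volume Z := measure_union_le _ _
      _ = volume (⋃ k ∈ allL, dyadicCube N L k ∩ A) := by rw [hZ0, add_zero]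
      _ ≤ ∑ k ∈ allL, volume (dyadicCube N L k ∩ A) := measure_biUnion_finset_le _ _
  -- step split
  have hsplit : ∑ k ∈ allL, volume (dyadicCube N L k ∩ A) =
      ∑ k ∈ H, volume (dyadicCube N L k ∩ A) +
      ∑ k ∈ allL.filter (fun k => ¬ hi k), volume (dyadicCube N L k ∩ A) := by
    rw [hH]
    exact (Finset.sum_filter_add_sum_filter_not allL hi _).symm
  -- step high : sum over H
  have stephigh : ∑ k ∈ H, volume (dyadicCube N L k ∩ A) ≤ volume (M ∩ A) := by
    have hdisjH : (↑H : Set (Fin N → ℕ)).PairwiseDisjoint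
        (fun k => dyadicCube N L k ∩ A) := by
      intro k hk k' hk' hne
      have : ∃ i, k i ≠ k' i := Function.ne_iff.mp hne
      obtain ⟨i, hi'⟩ := this
      have hd : Disjoint (dyadicCube N L k) (dyadicCube N L k') := by
        apply dc_disjoint le_rfl i
        simp only [Nat.sub_self, pow_zero, mul_one]
        omega
      exact (hd.mono (Set.inter_subset_left) (Set.inter_subset_left))
    rw [← measure_biUnion_finset hdisjH
      (fun k _ => (dc_measurable N L k).inter hA)]
    apply measure_mono
    apply Set.iUnion₂_subset
    intro k hk
    apply Set.subset_inter _ Set.inter_subset_right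
    intro x hx
    rw [hM]
    exact Set.mem_biUnion (Finset.mem_image_of_mem c hk) (prop_a k hx.1)
  -- step low : sum over the complement
  have steplow : ∑ k ∈ allL.filter (fun k => ¬ hi k), volume (dyadicCube N L k ∩ A) ≤
      ENNReal.ofReal δ₂ := by
    have hterm : ∀ k ∈ allL.filter (fun k => ¬ hi k),
        volume (dyadicCube N L k ∩ A) ≤
          ENNReal.ofReal δ₂ * (((2:ℝ≥0∞) ^ L)⁻¹) ^ N := by
      intro k hk
      have := (Finset.mem_filter.mp hk).2
      rw [hhi] at this
      simp only [not_lt] at this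
      calc volume (dyadicCube N L k ∩ A) ≤
          ENNReal.ofReal δ₂ * volume (dyadicCube N L k) := this
        _ = ENNReal.ofReal δ₂ * (((2:ℝ≥0∞) ^ L)⁻¹) ^ N := by rw [dc_volume]
    calc ∑ k ∈ allL.filter (fun k => ¬ hi k), volume (dyadicCube N L k ∩ A)
        ≤ ∑ _k ∈ allL.filter (fun k => ¬ hi k),
            ENNReal.ofReal δ₂ * (((2:ℝ≥0∞) ^ L)⁻¹) ^ N := Finset.sum_le_sum hterm
      _ = (allL.filter (fun k => ¬ hi k)).card *
            (ENNReal.ofReal δ₂ * (((2:ℝ≥0∞) ^ L)⁻¹) ^ N) := by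
          rw [Finset.sum_const, nsmul_eq_mul]
      _ ≤ (allL.card : ℝ≥0∞) * (ENNReal.ofReal δ₂ * (((2:ℝ≥0∞) ^ L)⁻¹) ^ N) := by
          gcongr
          exact Finset.filter_subset _ _
      _ ≤ ENNReal.ofReal δ₂ := by
          rw [hallL, Fintype.card_piFinset]
          simp only [Finset.card_range, Finset.prod_const, Finset.card_univ, Fintype.card_fin]
          have hone : (((2:ℝ≥0∞) ^ L) ^ N) * (((2:ℝ≥0∞) ^ L)⁻¹) ^ N = 1 := by
            rw [← mul_pow, ENNReal.mul_inv_cancel (by positivity) (ENNReal.pow_ne_top (by norm_num)), one_pow]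
          calc ((((2 ^ L) ^ N : ℕ)) : ℝ≥0∞) * (ENNReal.ofReal δ₂ * (((2:ℝ≥0∞) ^ L)⁻¹) ^ N)
              = ENNReal.ofReal δ₂ * ((((2:ℝ≥0∞) ^ L) ^ N) * (((2:ℝ≥0∞) ^ L)⁻¹) ^ N) := by
                push_cast
                ring
            _ ≤ ENNReal.ofReal δ₂ := by rw [hone, mul_one]
  -- conclusion
  calc volume A ≤ ∑ k ∈ allL, volume (dyadicCube N L k ∩ A) := step1
    _ = ∑ k ∈ H, volume (dyadicCube N L k ∩ A) +
        ∑ k ∈ allL.filter (fun k => ¬ hi k), volume (dyadicCube N L k ∩ A) := hsplit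
    _ ≤ volume (M ∩ A) + ENNReal.ofReal δ₂ := add_le_add stephigh steplow
    _ ≤ ENNReal.ofReal δ₁ * volume B + ENNReal.ofReal δ₂ := add_le_add hMbound le_rfl
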